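/- arXiv:1811.10331 — 6 statements merged into one kernel-verified Lean document; each statement's English description precedes it below -/
import Mathlib

section
/- Let C ⊆ ℝⁿ be a nonempty open convex set and let H : C → S⁺⁺(n) (the symmetric positive definite n×n matrices) be of class C¹. Then the following are equivalent: (i) for every y ∈ C there exists a C¹ function φ_y : C → ℝ whose Euclidean gradient satisfies ∇φ_y(x) = H(x)(x − y) for all x ∈ C (i.e. the vector fields x ↦ x − y are gradient fields for the Riemannian metric (u,v)ₓ = ⟨H(x)u, v⟩); (ii) there exists a strictly convex function h ∈ C³(C) such that H(x) = ∇²h(x) for all x ∈ C. Moreover, when (ii) holds, the function D_h(y,x) = h(y) − h(x) − ⟨∇h(x), y − x⟩ satisfies: for every y ∈ C, the Euclidean gradient of x ↦ D_h(y,x) at x ∈ C equals ∇²h(x)(x − y). -/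
noncomputable section
open Set Filter Topology Matrix

abbrev E (n : ℕ) := EuclideanSpace ℝ (Fin n)

/-- Action of a matrix on a vector of `EuclideanSpace ℝ (Fin n)`. -/
def matVec {n : ℕ} (M : Matrix (Fin n) (Fin n) ℝ) (v : E n) : E n := WithLp.toLp 2 (M.mulVec v)

/-- The continuous linear map on Euclidean space associated with a matrix. -/
def matCLM {n : ℕ} (M : Matrix (Fin n) (Fin n) ℝ) : E n →L[ℝ] E n :=
  LinearMap.toContinuousLinearMap (Matrix.toEuclideanLin M)


open MeasureTheory intervalIntegral

variable {n : ℕ}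


lemma matCLM_apply (M : Matrix (Fin n) (Fin n) ℝ) (v : E n) : matCLM M v = matVec M v := by
  simp only [matCLM, matVec, Matrix.toEuclideanLin_apply,
    LinearMap.coe_toContinuousLinearMap']

lemma inner_matVec_comm (M : Matrix (Fin n) (Fin n) ℝ) (hM : M.IsHermitian) (u v : E n) :
    (inner ℝ (matVec M u) v : ℝ) = inner ℝ u (matVec M v) := by
  have hs : Mᵀ = M := by rw [← Matrix.conjTranspose_eq_transpose_of_trivial]; exact hM
  simp only [matVec, PiLp.inner_apply, RCLike.inner_apply', conj_trivial]
  have : ∀ (a b : Fin n → ℝ), ∑ i, a i * b i = a ⬝ᵥ b := fun a b => rfl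
  show ∑ i, (M *ᵥ _) i * _ = ∑ i, _ * (M *ᵥ _) i
  rw [this, this]
  rw [dotProduct_comm, Matrix.dotProduct_mulVec, ← Matrix.mulVec_transpose, hs,
    dotProduct_comm]

lemma inner_matVec_self_pos (M : Matrix (Fin n) (Fin n) ℝ) (hM : M.PosDef) (v : E n)
    (hv : v ≠ 0) : (0:ℝ) < inner ℝ (matVec M v) v := by
  have hv' : (v : Fin n → ℝ) ≠ 0 := by
    intro h
    apply hv
    ext i
    exact congrFun h i
  have h2 := hM.dotProduct_mulVec_pos hv'
  have h3 : (0:ℝ) < (v : Fin n → ℝ) ⬝ᵥ M.mulVec (v : Fin n → ℝ) := by simpa using h2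
  simp only [matVec, PiLp.inner_apply, RCLike.inner_apply', conj_trivial]
  show (0:ℝ) < ∑ i, (M *ᵥ (v : Fin n → ℝ)) i * (v : Fin n → ℝ) i
  have hdp : ∑ i, (M *ᵥ (v : Fin n → ℝ)) i * (v : Fin n → ℝ) i
      = (M *ᵥ (v : Fin n → ℝ)) ⬝ᵥ (v : Fin n → ℝ) := rfl
  rw [hdp, dotProduct_comm]
  exact h3

lemma matVec_sub (M : Matrix (Fin n) (Fin n) ℝ) (u v : E n) :
    matVec M (u - v) = matVec M u - matVec M v := by
  simp only [matVec]
  rw [WithLp.ofLp_sub, Matrix.mulVec_sub, WithLp.toLp_sub]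

lemma part2 {C : Set (E n)} {H : E n → Matrix (Fin n) (Fin n) ℝ} (hCopen : IsOpen C)
    (hHpos : ∀ x ∈ C, (H x).PosDef) (h : E n → ℝ) (hC3 : ContDiffOn ℝ 3 h C)
    (hgrad : ∀ x ∈ C, HasFDerivAt (gradient h) (matCLM (H x)) x) :
    ∀ y ∈ C, ∀ x ∈ C, HasGradientAt (fun z => h y - h z - (inner ℝ (gradient h z) (y - z) : ℝ))
      (matVec (H x) (x - y)) x := by
  intro y hy x hx
  have hdiff : DifferentiableAt ℝ h x :=
    (hC3.contDiffAt (hCopen.mem_nhds hx)).differentiableAt (by norm_num)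
  have hh : HasFDerivAt h ((InnerProductSpace.toDual ℝ (E n)) (gradient h x)) x :=
    hasGradientAt_iff_hasFDerivAt.1 hdiff.hasGradientAt
  have h2 : HasFDerivAt (fun z : E n => y - z) (-(ContinuousLinearMap.id ℝ (E n))) x :=
    (hasFDerivAt_id x).const_sub y
  have hinner := (hgrad x hx).inner ℝ h2
  have hφ := ((hasFDerivAt_const (h y) x).sub hh).sub hinner
  rw [hasGradientAt_iff_hasFDerivAt]
  refine hφ.congr_fderiv (Eq.symm ?_)
  refine ContinuousLinearMap.ext fun v => ?_
  have hsymm := inner_matVec_comm (H x) (hHpos x hx).1 v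
  simp only [InnerProductSpace.toDual_apply_apply, ContinuousLinearMap.sub_apply,
    ContinuousLinearMap.coe_comp', Function.comp_apply, ContinuousLinearMap.prod_apply,
    ContinuousLinearMap.neg_apply, ContinuousLinearMap.coe_id', id_eq,
    ContinuousLinearMap.zero_apply, fderivInnerCLM_apply, hasFDerivAt_const,
    matCLM_apply, inner_neg_right]
  rw [hsymm (y - x), real_inner_comm v (matVec (H x) (x - y))]
  have : matVec (H x) (y - x) = matVec (H x) (y - y) - matVec (H x) (x - y) := by
    rw [← matVec_sub]; abel_nf
  rw [this]
  have hyy : matVec (H x) (y - y) = 0 := by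
    have : (y - y : E n) = 0 := by abel
    rw [this]
    simp [matVec, Matrix.mulVec_zero]
  rw [hyy, inner_sub_right]
  simp only [inner_zero_right]
  ring

lemma strictconv {C : Set (E n)} {H : E n → Matrix (Fin n) (Fin n) ℝ} (hCopen : IsOpen C)
    (hCconv : Convex ℝ C) (hHpos : ∀ x ∈ C, (H x).PosDef) {h : E n → ℝ} {g : E n → E n}
    (hder : ∀ x ∈ C, HasFDerivAt h (innerSL ℝ (g x)) x)
    (hg : ∀ x ∈ C, HasFDerivAt g (matCLM (H x)) x) :
    StrictConvexOn ℝ C h := by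
  refine ⟨hCconv, ?_⟩
  intro x hx z hz hne a b ha hb hab
  set c : ℝ → E n := fun t => x + t • (z - x) with hc
  have hctscont : Continuous c := by fun_prop
  set T : Set ℝ := c ⁻¹' C with hT
  have hTopen : IsOpen T := hctscont.isOpen_preimage C hCopen
  have hsub : Icc (0:ℝ) 1 ⊆ T := by
    intro t ht
    show c t ∈ C
    have : c t = (1 - t) • x + t • z := by
      rw [hc]; simp only; rw [smul_sub, sub_smul, one_smul]; abel
    rw [this]
    exact hCconv hx hz (by linarith [ht.2]) ht.1 (by ring)
  have hcderiv : ∀ t : ℝ, HasDerivAt c (z - x) t := by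
    intro t
    have := ((hasDerivAt_id t).smul_const (z - x)).const_add x
    simpa [hc] using this
  set ψ : ℝ → ℝ := fun t => h (c t) with hψ
  set ψ₁ : ℝ → ℝ := fun t => (inner ℝ (g (c t)) (z - x) : ℝ) with hψ₁
  have hψd : ∀ t ∈ T, HasDerivAt ψ (ψ₁ t) t := by
    intro t ht
    have := (hder _ ht).comp_hasDerivAt t (hcderiv t)
    simp only [innerSL_apply_apply] at this
    exact this
  have hψ₁d : ∀ t ∈ T, HasDerivAt ψ₁ ((inner ℝ (matVec (H (c t)) (z - x)) (z - x) : ℝ)) t := by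
    intro t ht
    have h1 : HasDerivAt (fun s => g (c s)) (matCLM (H (c t)) (z - x)) t :=
      (hg _ ht).comp_hasDerivAt t (hcderiv t)
    have := h1.inner ℝ (hasDerivAt_const t (z - x))
    simpa [hψ₁, matCLM_apply] using this
  have hSC : StrictConvexOn ℝ (Icc (0:ℝ) 1) ψ := by
    apply strictConvexOn_of_deriv2_pos (convex_Icc 0 1)
    · intro t ht
      exact ((hψd t (hsub ht)).continuousAt).continuousWithinAt
    · intro t ht
      rw [interior_Icc] at ht
      have htT : t ∈ T := hsub (Ioo_subset_Icc_self ht)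
      have hev : deriv ψ =ᶠ[𝓝 t] ψ₁ := by
        filter_upwards [hTopen.mem_nhds htT] with s hs
        exact (hψd s hs).deriv
      rw [Function.iterate_succ, Function.iterate_one, Function.comp_apply]
      rw [hev.deriv_eq]
      rw [(hψ₁d t htT).deriv]
      exact inner_matVec_self_pos _ (hHpos _ htT) _ (sub_ne_zero.2 (Ne.symm hne))
  have h01 : (0:ℝ) ∈ Icc (0:ℝ) 1 := by constructor <;> norm_num
  have h11 : (1:ℝ) ∈ Icc (0:ℝ) 1 := by constructor <;> norm_num
  have := hSC.2 h01 h11 (by norm_num) ha hb hab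
  have e0 : c (a • (0:ℝ) + b • 1) = a • x + b • z := by
    rw [hc]; simp only [smul_eq_mul, mul_zero, mul_one, zero_add]
    rw [smul_sub]
    have hab' : a = 1 - b := by linarith
    rw [hab', sub_smul, one_smul]
    abel
  have e1 : ψ (a • (0:ℝ) + b • 1) = h (a • x + b • z) := by rw [hψ]; simp only; rw [e0]
  have e2 : ψ 0 = h x := by rw [hψ]; simp [hc]
  have e3 : ψ 1 = h z := by rw [hψ]; simp [hc]
  rw [e1, e2, e3] at this
  exact this

lemma matVec_add (M N : Matrix (Fin n) (Fin n) ℝ) (v : E n) :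
    matVec (M + N) v = matVec M v + matVec N v := by
  simp only [matVec]
  rw [Matrix.add_mulVec, WithLp.toLp_add]

lemma matVec_smulM (a : ℝ) (M : Matrix (Fin n) (Fin n) ℝ) (v : E n) :
    matVec (a • M) v = a • matVec M v := by
  simp only [matVec]
  rw [Matrix.smul_mulVec, WithLp.toLp_smul]

def matL : (Fin n → Fin n → ℝ) →L[ℝ] (E n →L[ℝ] E n) :=
  LinearMap.toContinuousLinearMap
  { toFun := fun M => matCLM (Matrix.of M)
    map_add' := fun M N => by
      refine ContinuousLinearMap.ext fun v => ?_
      rw [ContinuousLinearMap.add_apply, matCLM_apply, matCLM_apply, matCLM_apply]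
      exact matVec_add (Matrix.of M) (Matrix.of N) v
    map_smul' := fun a M => by
      refine ContinuousLinearMap.ext fun v => ?_
      rw [RingHom.id_apply, ContinuousLinearMap.smul_apply, matCLM_apply, matCLM_apply]
      exact matVec_smulM a (Matrix.of M) v }

lemma matL_apply (M : Matrix (Fin n) (Fin n) ℝ) : matL (fun i j => M i j) = matCLM M := rfl

def innerL : E n →L[ℝ] (E n →L[ℝ] ℝ) :=
  LinearMap.toContinuousLinearMap
  { toFun := fun w => innerSL ℝ w
    map_add' := fun a b => by ext v; simp [inner_add_left]
    map_smul' := fun r a => by ext v; simp [real_inner_smul_left] }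

lemma innerL_apply (w : E n) : innerL w = innerSL ℝ w := rfl

lemma contDiffOn_matCLM {m : WithTop ℕ∞} {C : Set (E n)} {H : E n → Matrix (Fin n) (Fin n) ℝ}
    (hH : ∀ i j, ContDiffOn ℝ m (fun x => H x i j) C) :
    ContDiffOn ℝ m (fun x => matCLM (H x)) C := by
  have hHmat : ContDiffOn ℝ m (fun x => (fun i j => H x i j : Fin n → Fin n → ℝ)) C := by
    rw [contDiffOn_pi]; intro i; rw [contDiffOn_pi]; intro j; exact hH i j
  have hcd : ContDiff ℝ m (matL (n := n)) := (matL (n := n)).contDiff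
  have := hcd.comp_contDiffOn hHmat
  exact this.congr (fun x _ => (matL_apply (H x)).symm) |>.congr (fun x _ => rfl)

lemma contDiffOn_of_hasFDerivAt {m : ℕ} {C : Set (E n)} (hCopen : IsOpen C)
    {F : Type*} [NormedAddCommGroup F] [NormedSpace ℝ F]
    {f : E n → F} {f' : E n → (E n →L[ℝ] F)}
    (hf : ∀ x ∈ C, HasFDerivAt f (f' x) x) (hf' : ContDiffOn ℝ m f' C) :
    ContDiffOn ℝ (m + 1 : ℕ) f C := by
  have : ((m + 1 : ℕ) : WithTop ℕ∞) = (m : WithTop ℕ∞) + 1 := by exact_mod_cast rfl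
  rw [this, contDiffOn_succ_iff_fderiv_of_isOpen hCopen]
  refine ⟨fun x hx => ((hf x hx).differentiableAt).differentiableWithinAt, ?_, ?_⟩
  · intro hm
    exfalso
    exact (by simp : (m : WithTop ℕ∞) ≠ ⊤) hm
  · exact hf'.congr (fun x hx => (hf x hx).fderiv)

lemma matVec_smulv (M : Matrix (Fin n) (Fin n) ℝ) (a : ℝ) (v : E n) :
    matVec M (a • v) = a • matVec M v := by
  simp only [matVec]
  rw [WithLp.ofLp_smul, Matrix.mulVec_smul, WithLp.toLp_smul]


set_option maxHeartbeats 1000000 in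
set_option synthInstance.maxHeartbeats 400000 in
theorem poincare {s : Set (E n)} (hs : IsOpen s) (hconv : Convex ℝ s)
    {y₀ : E n} (hy₀ : y₀ ∈ s) {g : E n → E n} {A : E n → (E n →L[ℝ] E n)}
    (hg : ∀ x ∈ s, HasFDerivAt g (A x) x)
    (hA : ContinuousOn A s)
    (hsym : ∀ x ∈ s, ∀ u v : E n, (inner ℝ (A x u) v : ℝ) = inner ℝ u (A x v)) :
    ∀ x ∈ s, HasFDerivAt (fun z => ∫ t in (0:ℝ)..1, (inner ℝ (g (y₀ + t • (z - y₀))) (z - y₀) : ℝ))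
      (innerSL ℝ (g x)) x := by
  have gcont : ContinuousOn g s := fun z hz =>
    ((hg z hz).differentiableAt.continuousAt).continuousWithinAt
  have hc_mem : ∀ z ∈ s, ∀ t ∈ Icc (0:ℝ) 1, y₀ + t • (z - y₀) ∈ s := by
    intro z hz t ht
    have : y₀ + t • (z - y₀) = (1 - t) • y₀ + t • z := by
      rw [smul_sub, sub_smul, one_smul]; abel
    rw [this]
    exact hconv hy₀ hz (by linarith [ht.2]) ht.1 (by ring)
  have hccont : ∀ z : E n, Continuous (fun t : ℝ => y₀ + t • (z - y₀)) := by
    intro z; fun_prop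
  intro x hx
  obtain ⟨r₀, hr₀pos, hball⟩ := Metric.isOpen_iff.1 hs x hx
  set r := r₀ / 2 with hr
  have hrpos : 0 < r := by positivity
  have hcb : Metric.closedBall x r ⊆ s := fun z hz =>
    hball (lt_of_le_of_lt (Metric.mem_closedBall.1 hz) (by rw [hr]; linarith))
  set K : Set (E n) := (fun p : ℝ × E n => y₀ + p.1 • (p.2 - y₀)) '' (Icc 0 1 ×ˢ Metric.closedBall x r) with hK
  have hKcomp : IsCompact K := by
    apply IsCompact.image (isCompact_Icc.prod (isCompact_closedBall x r))
    fun_prop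
  have hKs : K ⊆ s := by
    rintro _ ⟨⟨t, z⟩, ⟨ht, hz⟩, rfl⟩
    exact hc_mem z (hcb hz) t ht
  have hKmem : ∀ t ∈ Icc (0:ℝ) 1, ∀ z ∈ Metric.ball x r, y₀ + t • (z - y₀) ∈ K := by
    intro t ht z hz
    exact ⟨(t, z), ⟨ht, Metric.ball_subset_closedBall hz⟩, rfl⟩
  obtain ⟨Mg, hMg⟩ := hKcomp.exists_bound_of_continuousOn (gcont.mono hKs)
  obtain ⟨MA, hMA⟩ := hKcomp.exists_bound_of_continuousOn (hA.mono hKs)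
  -- the derivative candidate family
  set F' : E n → ℝ → (E n →L[ℝ] ℝ) := fun z t =>
    t • ((innerSL ℝ (z - y₀)).comp (A (y₀ + t • (z - y₀)))) + innerSL ℝ (g (y₀ + t • (z - y₀)))
    with hF'
  have hIoc : uIoc (0:ℝ) 1 = Ioc 0 1 := uIoc_of_le zero_le_one
  have hIccsub : Ioc (0:ℝ) 1 ⊆ Icc 0 1 := Ioc_subset_Icc_self
  -- differentiability in z
  have hdiff : ∀ t ∈ Icc (0:ℝ) 1, ∀ z ∈ Metric.ball x r,
      HasFDerivAt (fun w => (inner ℝ (g (y₀ + t • (w - y₀))) (w - y₀) : ℝ)) (F' z t) z := by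
    intro t ht z hz
    have hcz : y₀ + t • (z - y₀) ∈ s := hc_mem z (hcb (Metric.ball_subset_closedBall hz)) t ht
    have hlin : HasFDerivAt (fun w : E n => y₀ + t • (w - y₀))
        (t • (ContinuousLinearMap.id ℝ (E n))) z := by
      have h : HasFDerivAt (fun w : E n => w - y₀) (ContinuousLinearMap.id ℝ (E n)) z :=
        (hasFDerivAt_id z).sub_const y₀
      exact (h.const_smul t).const_add y₀
    have h1 : HasFDerivAt (fun w => g (y₀ + t • (w - y₀)))
        ((A (y₀ + t • (z - y₀))).comp (t • ContinuousLinearMap.id ℝ (E n))) z :=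
      (hg _ hcz).comp z hlin
    have h2 : HasFDerivAt (fun w : E n => w - y₀) (ContinuousLinearMap.id ℝ (E n)) z :=
      (hasFDerivAt_id z).sub_const y₀
    have h3 := h1.inner ℝ h2
    refine h3.congr_fderiv (Eq.symm ?_)
    refine ContinuousLinearMap.ext fun v => ?_
    simp only [hF', ContinuousLinearMap.add_apply, ContinuousLinearMap.smul_apply,
      ContinuousLinearMap.coe_comp', Function.comp_apply, innerSL_apply_apply,
      ContinuousLinearMap.prod_apply, ContinuousLinearMap.coe_id', id_eq,
      fderivInnerCLM_apply, _root_.map_smul, smul_eq_mul, real_inner_smul_left,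
      real_inner_smul_right]
    rw [real_inner_comm (z - y₀) ((A (y₀ + t • (z - y₀))) v)]
    ring
  -- bound
  set B : ℝ := (r + ‖x - y₀‖) * |MA| + |Mg| with hB
  have hbound : ∀ t ∈ uIoc (0:ℝ) 1, ∀ z ∈ Metric.ball x r, ‖F' z t‖ ≤ B := by
    intro t ht z hz
    rw [hIoc] at ht
    have htIcc : t ∈ Icc (0:ℝ) 1 := hIccsub ht
    have hcK : y₀ + t • (z - y₀) ∈ K := hKmem t htIcc z hz
    have hgn : ‖g (y₀ + t • (z - y₀))‖ ≤ |Mg| := (hMg _ hcK).trans (le_abs_self Mg)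
    have hAn : ‖A (y₀ + t • (z - y₀))‖ ≤ |MA| := (hMA _ hcK).trans (le_abs_self MA)
    have hzn : ‖z - y₀‖ ≤ r + ‖x - y₀‖ := by
      calc ‖z - y₀‖ ≤ ‖z - x‖ + ‖x - y₀‖ := norm_sub_le_norm_sub_add_norm_sub z x y₀
        _ ≤ r + ‖x - y₀‖ := by
            have := Metric.mem_ball.1 hz
            rw [dist_eq_norm] at this
            linarith
    have htabs : |t| ≤ 1 := by rw [abs_le]; constructor <;> linarith [ht.1, ht.2]
    have e1 : ‖t • ((innerSL ℝ (z - y₀)).comp (A (y₀ + t • (z - y₀))))‖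
        ≤ |t| * ‖(innerSL ℝ (z - y₀)).comp (A (y₀ + t • (z - y₀)))‖ := by
      simpa [Real.norm_eq_abs] using
        norm_smul_le t ((innerSL ℝ (z - y₀)).comp (A (y₀ + t • (z - y₀))))
    have e2 : ‖innerSL ℝ (g (y₀ + t • (z - y₀)))‖ = ‖g (y₀ + t • (z - y₀))‖ :=
      innerSL_apply_norm ℝ _
    have e3 : ‖innerSL ℝ (z - y₀)‖ = ‖z - y₀‖ := innerSL_apply_norm ℝ _
    calc ‖F' z t‖ ≤ ‖t • ((innerSL ℝ (z - y₀)).comp (A (y₀ + t • (z - y₀))))‖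
          + ‖innerSL ℝ (g (y₀ + t • (z - y₀)))‖ := norm_add_le _ _
      _ ≤ |t| * ‖(innerSL ℝ (z - y₀)).comp (A (y₀ + t • (z - y₀)))‖
          + ‖g (y₀ + t • (z - y₀))‖ := by rw [e2]; gcongr
      _ ≤ 1 * (‖innerSL ℝ (z - y₀)‖ * ‖A (y₀ + t • (z - y₀))‖) + |Mg| := by
          gcongr
          exact ContinuousLinearMap.opNorm_comp_le _ _
      _ ≤ 1 * ((r + ‖x - y₀‖) * |MA|) + |Mg| := by
          gcongr
          · rw [e3]; exact hzn
      _ = B := by rw [hB]; ring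
  -- measurability in t
  have hFcont : ∀ z ∈ Metric.ball x r,
      ContinuousOn (fun t : ℝ => (inner ℝ (g (y₀ + t • (z - y₀))) (z - y₀) : ℝ)) (Icc 0 1) := by
    intro z hz
    apply ContinuousOn.inner
    · exact gcont.comp ((hccont z).continuousOn) (fun t ht =>
        hc_mem z (hcb (Metric.ball_subset_closedBall hz)) t ht)
    · exact continuousOn_const
  have hF'cont : ContinuousOn (fun t => F' x t) (Icc 0 1) := by
    have hcx : ContinuousOn (fun t : ℝ => A (y₀ + t • (x - y₀))) (Icc 0 1) :=
      hA.comp ((hccont x).continuousOn) (fun t ht => hc_mem x hx t ht)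
    have hgx : ContinuousOn (fun t : ℝ => g (y₀ + t • (x - y₀))) (Icc 0 1) :=
      gcont.comp ((hccont x).continuousOn) (fun t ht => hc_mem x hx t ht)
    apply ContinuousOn.add
    · exact (continuousOn_id).smul (continuousOn_const.clm_comp hcx)
    · exact (innerSL ℝ).continuous.comp_continuousOn hgx
  -- apply dominated differentiation
  have key := intervalIntegral.hasFDerivAt_integral_of_dominated_of_fderiv_le
    (F := fun z t => (inner ℝ (g (y₀ + t • (z - y₀))) (z - y₀) : ℝ))
    (F' := F') (x₀ := x) (a := (0:ℝ)) (b := 1) (μ := volume) (bound := fun _ => B)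
    (Metric.ball_mem_nhds x hrpos)
    (by
      filter_upwards [Metric.ball_mem_nhds x hrpos] with z hz
      rw [hIoc]
      exact ((hFcont z hz).mono hIccsub).aestronglyMeasurable measurableSet_Ioc)
    (by
      apply ContinuousOn.intervalIntegrable
      rw [uIcc_of_le (zero_le_one)]
      exact hFcont x (Metric.mem_ball_self hrpos))
    (by
      rw [hIoc]
      exact (hF'cont.mono hIccsub).aestronglyMeasurable measurableSet_Ioc)
    (Filter.Eventually.of_forall hbound)
    intervalIntegrable_const
    (by
      apply Filter.Eventually.of_forall
      intro t ht z hz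
      rw [hIoc] at ht
      exact hdiff t (hIccsub ht) z hz)
  -- identify the integral
  have hIint : IntervalIntegrable (F' x) volume 0 1 := by
    apply ContinuousOn.intervalIntegrable
    rw [uIcc_of_le (zero_le_one)]
    exact hF'cont
  have hkey : (∫ t in (0:ℝ)..1, F' x t) = innerSL ℝ (g x) := by
    refine ContinuousLinearMap.ext fun v => ?_
    rw [ContinuousLinearMap.intervalIntegral_apply hIint]
    have hderiv : ∀ t ∈ uIcc (0:ℝ) 1,
        HasDerivAt (fun t : ℝ => t * (inner ℝ (g (y₀ + t • (x - y₀))) v : ℝ))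
          ((inner ℝ (g (y₀ + t • (x - y₀))) v : ℝ)
            + t * (inner ℝ (A (y₀ + t • (x - y₀)) (x - y₀)) v : ℝ)) t := by
      intro t ht
      rw [uIcc_of_le zero_le_one] at ht
      have hcz : y₀ + t • (x - y₀) ∈ s := hc_mem x hx t ht
      have hl : HasDerivAt (fun t : ℝ => y₀ + t • (x - y₀)) (x - y₀) t := by
        have := ((hasDerivAt_id t).smul_const (x - y₀)).const_add y₀
        simpa using this
      have hq : HasDerivAt (fun t : ℝ => g (y₀ + t • (x - y₀)))
          (A (y₀ + t • (x - y₀)) (x - y₀)) t := (hg _ hcz).comp_hasDerivAt t hl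
      have hinner : HasDerivAt (fun t : ℝ => (inner ℝ (g (y₀ + t • (x - y₀))) v : ℝ))
          ((inner ℝ (A (y₀ + t • (x - y₀)) (x - y₀)) v : ℝ)) t := by
        have := hq.inner ℝ (hasDerivAt_const t v)
        simpa using this
      have := (hasDerivAt_id t).mul hinner
      exact this.congr_deriv (by simp)
    have hintg : IntervalIntegrable
        (fun t : ℝ => (inner ℝ (g (y₀ + t • (x - y₀))) v : ℝ)
          + t * (inner ℝ (A (y₀ + t • (x - y₀)) (x - y₀)) v : ℝ)) volume 0 1 := by
      apply ContinuousOn.intervalIntegrable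
      rw [uIcc_of_le (zero_le_one)]
      have hgx : ContinuousOn (fun t : ℝ => g (y₀ + t • (x - y₀))) (Icc 0 1) :=
        gcont.comp ((hccont x).continuousOn) (fun t ht => hc_mem x hx t ht)
      have hAx : ContinuousOn (fun t : ℝ => A (y₀ + t • (x - y₀))) (Icc 0 1) :=
        hA.comp ((hccont x).continuousOn) (fun t ht => hc_mem x hx t ht)
      apply ContinuousOn.add
      · exact hgx.inner continuousOn_const
      · exact (continuousOn_id).mul ((hAx.clm_apply continuousOn_const).inner continuousOn_const)
    have hFTC := intervalIntegral.integral_eq_sub_of_hasDerivAt hderiv hintg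
    have hcongr : EqOn (fun t : ℝ => (F' x t) v)
        (fun t : ℝ => (inner ℝ (g (y₀ + t • (x - y₀))) v : ℝ)
          + t * (inner ℝ (A (y₀ + t • (x - y₀)) (x - y₀)) v : ℝ)) (uIcc 0 1) := by
      intro t ht
      rw [uIcc_of_le zero_le_one] at ht
      have hcz : y₀ + t • (x - y₀) ∈ s := hc_mem x hx t ht
      simp only [hF', ContinuousLinearMap.add_apply, ContinuousLinearMap.smul_apply,
        ContinuousLinearMap.coe_comp', Function.comp_apply, innerSL_apply_apply, smul_eq_mul]
      rw [← hsym _ hcz (x - y₀) v]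
      ring
    rw [intervalIntegral.integral_congr hcongr, hFTC]
    simp
  rw [← hkey]
  exact key

set_option maxHeartbeats 1000000 in
set_option synthInstance.maxHeartbeats 400000 in
/-- Let `C ⊆ ℝⁿ` be a nonempty open convex set and `H : C → S⁺⁺(n)` of
class `C¹`.  The vector fields `x ↦ x − y`, `y ∈ C`, are gradient vector fields for the
Riemannian metric `(u,v)ₓ = ⟨H(x)u,v⟩` (i.e. for every `y ∈ C` there is a `C¹` function
`φ_y` with Euclidean gradient `∇φ_y(x) = H(x)(x−y)`) if and only if there is a strictly
convex `h ∈ C³(C)` with `∇²h = H` on `C`.  Moreover, in that case the `D`-function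
`D_h(y,x) = h(y) − h(x) − ⟨∇h(x), y − x⟩` satisfies `∇ₓ D_h(y,·)(x) = ∇²h(x)(x − y)`. -/
theorem stmt0 (n : ℕ) (C : Set (E n)) (H : E n → Matrix (Fin n) (Fin n) ℝ)
    (hCne : C.Nonempty) (hCopen : IsOpen C) (hCconv : Convex ℝ C)
    (hHC1 : ∀ i j : Fin n, ContDiffOn ℝ 1 (fun x => H x i j) C)
    (hHpos : ∀ x ∈ C, (H x).PosDef) :
    ((∀ y ∈ C, ∃ φ : E n → ℝ, ContDiffOn ℝ 1 φ C ∧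
        ∀ x ∈ C, HasGradientAt φ (matVec (H x) (x - y)) x)
      ↔
      (∃ h : E n → ℝ, ContDiffOn ℝ 3 h C ∧ StrictConvexOn ℝ C h ∧
        ∀ x ∈ C, HasFDerivAt (gradient h) (matCLM (H x)) x))
    ∧
    (∀ h : E n → ℝ, ContDiffOn ℝ 3 h C → StrictConvexOn ℝ C h →
      (∀ x ∈ C, HasFDerivAt (gradient h) (matCLM (H x)) x) →
      ∀ y ∈ C, ∀ x ∈ C,
        HasGradientAt (fun z => h y - h z - (inner ℝ (gradient h z) (y - z) : ℝ))
          (matVec (H x) (x - y)) x) := by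
  have hA1 : ContDiffOn ℝ 1 (fun x => matCLM (H x)) C := contDiffOn_matCLM hHC1
  constructor
  · constructor
    · -- (i) → (ii)
      intro hi
      obtain ⟨y₀, hy₀⟩ := hCne
      obtain ⟨δ, hδpos, hδball⟩ := Metric.isOpen_iff.1 hCopen y₀ hy₀
      set ε := δ / 2 with hε
      have hεpos : 0 < ε := by positivity
      have hyj : ∀ j : Fin n, y₀ + ε • EuclideanSpace.single j (1:ℝ) ∈ C := by
        intro j
        apply hδball
        rw [Metric.mem_ball, dist_eq_norm]
        have : y₀ + ε • EuclideanSpace.single j (1:ℝ) - y₀ = ε • EuclideanSpace.single j (1:ℝ) := by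
          abel
        rw [this, norm_smul, EuclideanSpace.norm_single, Real.norm_eq_abs, abs_of_pos hεpos]
        rw [norm_one, mul_one, hε]
        linarith
      obtain ⟨φ0, hφ0C, hφ0⟩ := hi y₀ hy₀
      choose Φ hΦC hΦg using fun j : Fin n => hi _ (hyj j)
      set e : E n ≃L[ℝ] (Fin n → ℝ) := PiLp.continuousLinearEquiv 2 ℝ (fun _ : Fin n => ℝ)
        with he
      set g : E n → E n := fun x => e.symm (fun j => ε⁻¹ * (φ0 x - Φ j x)) with hgdef
      have hsymH : ∀ x ∈ C, (H x)ᵀ = H x := by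
        intro x hx
        rw [← Matrix.conjTranspose_eq_transpose_of_trivial]; exact (hHpos x hx).1
      -- derivative of g
      have hgd : ∀ x ∈ C, HasFDerivAt g (matCLM (H x)) x := by
        intro x hx
        have hpi : HasFDerivAt (fun x => (fun j => ε⁻¹ * (φ0 x - Φ j x) : Fin n → ℝ))
            ((e : E n →L[ℝ] (Fin n → ℝ)).comp (matCLM (H x))) x := by
          rw [hasFDerivAt_pi']
          intro j
          have hcomp : HasFDerivAt (fun x => ε⁻¹ * (φ0 x - Φ j x))
              (ε⁻¹ • (((InnerProductSpace.toDual ℝ (E n)) (matVec (H x) (x - y₀)))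
                - ((InnerProductSpace.toDual ℝ (E n))
                    (matVec (H x) (x - (y₀ + ε • EuclideanSpace.single j (1:ℝ))))))) x :=
            ((hasGradientAt_iff_hasFDerivAt.1 (hφ0 x hx)).sub
              (hasGradientAt_iff_hasFDerivAt.1 (hΦg j x hx))).const_mul ε⁻¹
          refine hcomp.congr_fderiv (Eq.symm ?_)
          refine ContinuousLinearMap.ext fun v => ?_
          rw [ContinuousLinearMap.smul_apply, ContinuousLinearMap.sub_apply,
            InnerProductSpace.toDual_apply_apply, InnerProductSpace.toDual_apply_apply, smul_eq_mul,
            ← inner_sub_left, ← matVec_sub]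
          have hvec : (x - y₀) - (x - (y₀ + ε • EuclideanSpace.single j (1:ℝ)))
              = ε • EuclideanSpace.single j (1:ℝ) := by abel
          rw [hvec, matVec_smulv, real_inner_smul_left, ← mul_assoc,
            inv_mul_cancel₀ hεpos.ne', one_mul]
          show ((ContinuousLinearMap.proj j).comp
              ((e : E n →L[ℝ] (Fin n → ℝ)).comp (matCLM (H x)))) v
            = (inner ℝ (matVec (H x) (EuclideanSpace.single j (1:ℝ))) v : ℝ)
          rw [PiLp.inner_apply]
          simp only [RCLike.inner_apply', conj_trivial]
          have hval : ∀ k, (matVec (H x) (EuclideanSpace.single j (1:ℝ))) k = H x k j := by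
            intro k
            show ((H x) *ᵥ (EuclideanSpace.single j (1:ℝ) : Fin n → ℝ)) k = H x k j
            have hv1 : (EuclideanSpace.single j (1:ℝ) : Fin n → ℝ) = Pi.single j 1 := rfl
            rw [hv1]
            simp [Matrix.mulVec_single]
          have hlhs : ((ContinuousLinearMap.proj j).comp
              ((e : E n →L[ℝ] (Fin n → ℝ)).comp (matCLM (H x)))) v
              = ((H x) *ᵥ (v : Fin n → ℝ)) j := by
            simp only [ContinuousLinearMap.coe_comp', Function.comp_apply,
              ContinuousLinearMap.proj_apply, matCLM_apply]
            rfl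
          rw [hlhs]
          show ∑ k, (H x j k) * (v : Fin n → ℝ) k = _
          refine Finset.sum_congr rfl fun k _ => ?_
          rw [hval k]
          have : H x k j = H x j k := congrFun (congrFun (hsymH x hx) j) k
          rw [this]
        have hfinal := ((e.symm.hasFDerivAt).comp x hpi)
        have hid : ((e.symm : (Fin n → ℝ) →L[ℝ] E n).comp
            ((e : E n →L[ℝ] (Fin n → ℝ)).comp (matCLM (H x)))) = matCLM (H x) := by
          refine ContinuousLinearMap.ext fun v => ?_
          rfl
        rw [hid] at hfinal
        exact hfinal
      -- Poincaré lemma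
      set h : E n → ℝ :=
        fun z => ∫ t in (0:ℝ)..1, (inner ℝ (g (y₀ + t • (z - y₀))) (z - y₀) : ℝ) with hhdef
      have hfd : ∀ x ∈ C, HasFDerivAt h (innerSL ℝ (g x)) x := by
        apply poincare hCopen hCconv hy₀ hgd hA1.continuousOn
        intro x hx u v
        rw [matCLM_apply, matCLM_apply]
        exact inner_matVec_comm (H x) (hHpos x hx).1 u v
      -- smoothness
      have hg2 : ContDiffOn ℝ 2 g C := by
        have := contDiffOn_of_hasFDerivAt (m := 1) hCopen hgd hA1
        simpa using this
      have hh3 : ContDiffOn ℝ 3 h C := by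
        have hinner2 : ContDiffOn ℝ 2 (fun x => innerSL ℝ (g x)) C := by
          have := (innerL (n := n)).contDiff.comp_contDiffOn hg2
          exact this.congr (fun x _ => (innerL_apply (g x)).symm)
        have := contDiffOn_of_hasFDerivAt (m := 2) hCopen hfd hinner2
        simpa using this
      -- gradient identification
      have hgradg : ∀ x ∈ C, gradient h x = g x := by
        intro x hx
        have h2 : (InnerProductSpace.toDual ℝ (E n)) (g x) = innerSL ℝ (g x) := by
          refine ContinuousLinearMap.ext fun v => ?_
          rw [InnerProductSpace.toDual_apply_apply]
          rfl
        have : HasGradientAt h (g x) x := by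
          rw [hasGradientAt_iff_hasFDerivAt, h2]
          exact hfd x hx
        exact this.gradient
      have hgradfd : ∀ x ∈ C, HasFDerivAt (gradient h) (matCLM (H x)) x := by
        intro x hx
        apply (hgd x hx).congr_of_eventuallyEq
        filter_upwards [hCopen.mem_nhds hx] with z hz
        exact hgradg z hz
      exact ⟨h, hh3, strictconv hCopen hCconv hHpos hfd hgd, hgradfd⟩
    · -- (ii) → (i)
      rintro ⟨h, hC3, _hsc, hgrad⟩ y hy
      refine ⟨fun z => h y - h z - (inner ℝ (gradient h z) (y - z) : ℝ), ?_, ?_⟩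
      · have hgrad1 : ContDiffOn ℝ 1 (gradient h) C := by
          have h0 : ContDiffOn ℝ (0:ℕ) (fun x => matCLM (H x)) C :=
            hA1.of_le (by exact_mod_cast zero_le_one)
          have := contDiffOn_of_hasFDerivAt (m := 0) hCopen hgrad h0
          simpa using this
        have hφinner : ContDiffOn ℝ 1 (fun z => (inner ℝ (gradient h z) (y - z) : ℝ)) C :=
          ContDiffOn.inner ℝ hgrad1 ((contDiff_const.sub contDiff_id).contDiffOn)
        exact (contDiffOn_const.sub (hC3.of_le (by norm_num))).sub hφinner
      · intro x hx
        exact part2 hCopen hHpos h hC3 hgrad y hy x hx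
  · intro h hC3 _hsc hgrad y hy x hx
    exact part2 hCopen hHpos h hC3 hgrad y hy x hx
end
end

section
/- Let x : [0, T) → F be a C¹ solution of the steepest descent equation ẋ(t) = −∇²h(x(t))⁻¹[I − Aᵀ(A∇²h(x(t))⁻¹Aᵀ)⁻¹A∇²h(x(t))⁻¹]∇f(x(t)). Then for every t ∈ [0, T), (d/dt) f(x(t)) = −⟨∇²h(x(t)) ẋ(t), ẋ(t)⟩ ≤ 0; in particular t ↦ f(x(t)) is nonincreasing on [0, T). -/
noncomputable section
open Set Filter Topology Matrix MeasureTheory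

/-- The steepest descent vector field
`x ↦ −H(x)⁻¹[I − Aᵀ(A H(x)⁻¹ Aᵀ)⁻¹ A H(x)⁻¹] g(x)` for the Hessian metric. -/
def sdVF {n m : ℕ} (A : Matrix (Fin m) (Fin n) ℝ)
    (Hess : E n → Matrix (Fin n) (Fin n) ℝ) (g : E n → E n) (x : E n) : E n :=
  -(matVec ((Hess x)⁻¹ * (1 - Aᵀ * (A * (Hess x)⁻¹ * Aᵀ)⁻¹ * A * (Hess x)⁻¹)) (g x))

/-- The `D`-function (Bregman distance) of `h`: `D_h(a,y) = h(a) − h(y) − ⟨∇h(y), a − y⟩`. -/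
def Dh {n : ℕ} (h : E n → ℝ) (a y : E n) : ℝ :=
  h a - h y - (inner ℝ (gradient h y) (a - y) : ℝ)

lemma inv_mul_inv_self' {k : ℕ} (M : Matrix (Fin k) (Fin k) ℝ) : M⁻¹ * M * M⁻¹ = M⁻¹ := by
  by_cases hd : IsUnit M.det
  · rw [Matrix.nonsing_inv_mul _ hd, Matrix.one_mul]
  · simp [Matrix.nonsing_inv_apply_not_isUnit _ hd]

lemma Qid' {n m : ℕ} (A : Matrix (Fin m) (Fin n) ℝ) {H : Matrix (Fin n) (Fin n) ℝ}
    (hH : H.PosDef) :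
    (H * (H⁻¹ * (1 - Aᵀ * (A * H⁻¹ * Aᵀ)⁻¹ * A * H⁻¹)))ᵀ *
      (H⁻¹ * (1 - Aᵀ * (A * H⁻¹ * Aᵀ)⁻¹ * A * H⁻¹))
      = H⁻¹ * (1 - Aᵀ * (A * H⁻¹ * Aᵀ)⁻¹ * A * H⁻¹) := by
  have hHT : Hᵀ = H := by
    rw [← Matrix.conjTranspose_eq_transpose_of_trivial]; exact hH.isHermitian.eq
  have hdet : IsUnit H.det := hH.det_pos.ne'.isUnit
  have hiT : (H⁻¹)ᵀ = H⁻¹ := by rw [Matrix.transpose_nonsing_inv, hHT]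
  set M := A * H⁻¹ * Aᵀ with hM
  have hMT : Mᵀ = M := by
    simp [hM, Matrix.transpose_mul, hiT, Matrix.mul_assoc]
  have hMiT : (M⁻¹)ᵀ = M⁻¹ := by rw [Matrix.transpose_nonsing_inv, hMT]
  set B := Aᵀ * M⁻¹ * A with hB
  have hBT : Bᵀ = B := by simp [hB, Matrix.transpose_mul, hMiT, Matrix.mul_assoc]
  have hBHB : B * H⁻¹ * B = B := by
    calc B * H⁻¹ * B = Aᵀ * (M⁻¹ * M * M⁻¹) * A := by
          rw [hB, hM]; simp only [Matrix.mul_assoc]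
      _ = B := by rw [inv_mul_inv_self', hB]
  have h1 : Aᵀ * M⁻¹ * A * H⁻¹ = B * H⁻¹ := by rw [hB]
  rw [h1]
  have hHP : H * (H⁻¹ * (1 - B * H⁻¹)) = 1 - B * H⁻¹ := by
    rw [← Matrix.mul_assoc, Matrix.mul_nonsing_inv _ hdet, Matrix.one_mul]
  rw [hHP]
  have hPT : (1 - B * H⁻¹)ᵀ = 1 - H⁻¹ * B := by
    rw [Matrix.transpose_sub, Matrix.transpose_one, Matrix.transpose_mul, hiT, hBT]
  rw [hPT]
  have expand : (1 - H⁻¹ * B) * (H⁻¹ * (1 - B * H⁻¹))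
      = H⁻¹ - H⁻¹ * B * H⁻¹ - (H⁻¹ * B * H⁻¹ - H⁻¹ * (B * H⁻¹ * B) * H⁻¹) := by
    noncomm_ring
  rw [expand, hBHB]
  noncomm_ring

lemma inner_eq_dot' {k : ℕ} (a b : E k) : (inner ℝ a b : ℝ) = dotProduct a b := by
  rw [EuclideanSpace.inner_eq_star_dotProduct]
  rw [star_trivial, dotProduct_comm]

theorem stmt4'
    {n m : ℕ}
    (A : Matrix (Fin m) (Fin n) ℝ)
    (C : Set (E n))
    (Hess : E n → Matrix (Fin n) (Fin n) ℝ)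
    (hHpos : ∀ x ∈ C, (Hess x).PosDef)
    (f : E n → ℝ) (hf : ContDiff ℝ 1 f)
    (b : Fin m → ℝ)
    (T : ℝ) (hT : 0 < T) (x : ℝ → E n)
    (hmem : ∀ t ∈ Ico 0 T, x t ∈ C ∩ {z | A.mulVec z = b})
    (hode : ∀ t ∈ Ico 0 T, HasDerivAt x (sdVF A Hess (gradient f) (x t)) t) :
    (∀ t ∈ Ico 0 T,
      HasDerivAt (fun s => f (x s))
        (-(inner ℝ (matVec (Hess (x t)) (sdVF A Hess (gradient f) (x t)))
            (sdVF A Hess (gradient f) (x t)) : ℝ)) t ∧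
      0 ≤ (inner ℝ (matVec (Hess (x t)) (sdVF A Hess (gradient f) (x t)))
            (sdVF A Hess (gradient f) (x t)) : ℝ)) ∧
    AntitoneOn (fun t => f (x t)) (Ico 0 T) := by
  have key : ∀ t ∈ Ico 0 T,
      HasDerivAt (fun s => f (x s))
        (-(inner ℝ (matVec (Hess (x t)) (sdVF A Hess (gradient f) (x t)))
            (sdVF A Hess (gradient f) (x t)) : ℝ)) t ∧
      0 ≤ (inner ℝ (matVec (Hess (x t)) (sdVF A Hess (gradient f) (x t)))
            (sdVF A Hess (gradient f) (x t)) : ℝ) := by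
    intro t ht
    set p := x t with hp
    have hpC : p ∈ C := (hmem t ht).1
    have hH := hHpos p hpC
    set H := Hess p with hHdef
    set g := gradient f p with hg
    set Q := H⁻¹ * (1 - Aᵀ * (A * H⁻¹ * Aᵀ)⁻¹ * A * H⁻¹) with hQ
    have hv : sdVF A Hess (gradient f) p = -(WithLp.toLp 2 (Q.mulVec g)) := rfl
    set w : E n := WithLp.toLp 2 (Q.mulVec g) with hw
    -- the inner products as dot products
    have hHv : matVec H (sdVF A Hess (gradient f) p) = -(WithLp.toLp 2 (H.mulVec w)) := by
      rw [hv]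
      show WithLp.toLp 2 (H.mulVec (-w).ofLp) = _
      rw [WithLp.ofLp_neg, Matrix.mulVec_neg]
      rfl
    have hinner : (inner ℝ (matVec H (sdVF A Hess (gradient f) p))
        (sdVF A Hess (gradient f) p) : ℝ) = dotProduct (H.mulVec w) w := by
      rw [hHv, hv, inner_eq_dot']
      rw [WithLp.ofLp_neg, WithLp.ofLp_neg, WithLp.ofLp_toLp, neg_dotProduct, dotProduct_neg, neg_neg]
    -- key algebraic identity
    have halg : dotProduct (H.mulVec w) w = dotProduct g w := by
      have h1 : H.mulVec w = (H * Q).mulVec g := by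
        rw [hw, WithLp.ofLp_toLp, Matrix.mulVec_mulVec]
      rw [h1, dotProduct_comm, Matrix.dotProduct_mulVec, dotProduct_comm,
        ← Matrix.mulVec_transpose, hw, WithLp.ofLp_toLp, Matrix.mulVec_mulVec]
      have := Qid' A hH
      rw [hQ]
      rw [this]
    -- nonnegativity
    have hnn : 0 ≤ dotProduct (H.mulVec w) w := by
      rw [dotProduct_comm]
      simpa using hH.posSemidef.re_dotProduct_nonneg w
    constructor
    · -- derivative
      have hF : HasFDerivAt f (InnerProductSpace.toDual ℝ (E n) g) p :=
        ((hf.differentiable one_ne_zero p).hasGradientAt).hasFDerivAt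
      have hd := hF.comp_hasDerivAt t (hode t ht)
      have hval : (InnerProductSpace.toDual ℝ (E n) g) (sdVF A Hess (gradient f) p)
          = -(inner ℝ (matVec H (sdVF A Hess (gradient f) p))
              (sdVF A Hess (gradient f) p) : ℝ) := by
        rw [InnerProductSpace.toDual_apply_apply, hinner, halg, hv, inner_eq_dot',
          WithLp.ofLp_neg, dotProduct_neg]
      rw [hval] at hd
      exact hd
    · rw [hinner]; exact hnn
  refine ⟨key, antitoneOn_of_deriv_nonpos (convex_Ico 0 T)
    (fun t ht => ((key t ht).1).continuousAt.continuousWithinAt) ?_ ?_⟩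
  · rw [interior_Ico]
    exact fun t ht => ((key t (Ioo_subset_Ico_self ht)).1).differentiableAt.differentiableWithinAt
  · rw [interior_Ico]
    intro t ht
    rw [((key t (Ioo_subset_Ico_self ht)).1).deriv]
    exact neg_nonpos.2 (key t (Ioo_subset_Ico_self ht)).2

/-- Along any `C¹` solution of the steepest descent equation,
`(d/dt) f(x(t)) = −⟨∇²h(x(t)) ẋ(t), ẋ(t)⟩ ≤ 0`; in particular `t ↦ f(x(t))`
is nonincreasing on `[0,T)`. -/
theorem stmt4
    -- problem data: a full rank `m×n` matrix `A` (`m < n`), `b ∈ ℝᵐ`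
    {n m : ℕ} (hm : 0 < m) (hmn : m < n)
    (A : Matrix (Fin m) (Fin n) ℝ) (b : Fin m → ℝ) (hrank : A.rank = m)
    -- `C` is a nonempty open convex set, `F = C ∩ {x | Ax = b}` is nonempty
    (C : Set (E n)) (hCopen : IsOpen C) (hCconv : Convex ℝ C) (hCne : C.Nonempty)
    (hFne : (C ∩ {x | A.mulVec x = b}).Nonempty)
    (h : E n → ℝ) (Hess : E n → Matrix (Fin n) (Fin n) ℝ)
    -- `(H₀)`: `h` is of Legendre type with `int dom h = C`: it is strictly convex on `C`,
    -- `C²` on `C`, and its gradient blows up at the boundary of `C`;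
    -- its Hessian `Hess` is positive definite and locally Lipschitz on `C`
    (hhC2 : ContDiffOn ℝ 2 h C) (hhconv : ConvexOn ℝ C h) (hhstrict : StrictConvexOn ℝ C h)
    (hLeg : ∀ (z : ℕ → E n) (x' : E n), (∀ j, z j ∈ C) → x' ∈ frontier C →
      Tendsto z atTop (𝓝 x') → Tendsto (fun j => ‖gradient h (z j)‖) atTop atTop)
    (hHess : ∀ x ∈ C, HasFDerivAt (gradient h) (matCLM (Hess x)) x)
    (hHpos : ∀ x ∈ C, (Hess x).PosDef)
    (hHlip : ∀ x ∈ C, ∃ ε > 0, ∃ K : ℝ, ∀ y ∈ C ∩ Metric.ball x ε, ∀ z ∈ C ∩ Metric.ball x ε,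
      ‖matCLM (Hess y) - matCLM (Hess z)‖ ≤ K * ‖y - z‖)
    -- `f` is `C¹` with locally Lipschitz gradient
    (f : E n → ℝ) (hf : ContDiff ℝ 1 f)
    (hfgrad : ∀ x : E n, ∃ ε > 0, ∃ K : ℝ, ∀ y ∈ Metric.ball x ε, ∀ z ∈ Metric.ball x ε,
      ‖gradient f y - gradient f z‖ ≤ K * ‖y - z‖)
    -- the trajectory: a `C¹` solution of `(H-SD)` on `[0,T)` with values in `F`
    (T : ℝ) (hT : 0 < T) (x : ℝ → E n)
    (hmem : ∀ t ∈ Ico 0 T, x t ∈ C ∩ {z | A.mulVec z = b})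
    (hode : ∀ t ∈ Ico 0 T, HasDerivAt x (sdVF A Hess (gradient f) (x t)) t) :
    (∀ t ∈ Ico 0 T,
      HasDerivAt (fun s => f (x s))
        (-(inner ℝ (matVec (Hess (x t)) (sdVF A Hess (gradient f) (x t)))
            (sdVF A Hess (gradient f) (x t)) : ℝ)) t ∧
      0 ≤ (inner ℝ (matVec (Hess (x t)) (sdVF A Hess (gradient f) (x t)))
            (sdVF A Hess (gradient f) (x t)) : ℝ)) ∧
    AntitoneOn (fun t => f (x t)) (Ico 0 T) := by
  exact stmt4' A C Hess hHpos f hf b T hT x hmem hode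
end
end

section
/- Let C ⊆ ℝⁿ be a nonempty open convex set and h be convex and differentiable on C. If (xʲ) ⊂ C is a sequence converging to a boundary point x* of C such that ‖∇h(xʲ)‖ → ∞ and ∇h(xʲ)/‖∇h(xʲ)‖ → ν for some ν ∈ ℝⁿ, then ν belongs to the normal cone N_{cl C}(x*), i.e. ⟨ν, y − x*⟩ ≤ 0 for all y ∈ cl C. -/
noncomputable section
open Set Filter Topology

/-- Gradient inequality for a convex function differentiable at a point. -/
lemma grad_ineq {n : ℕ} {C : Set (E n)} {h : E n → ℝ} (hconv : ConvexOn ℝ C h)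
    {x y : E n} (hx : x ∈ C) (hy : y ∈ C) (hd : DifferentiableAt ℝ h x) :
    (inner ℝ (gradient h x) (y - x) : ℝ) ≤ h y - h x := by
  set L : ℝ →ᵃ[ℝ] E n := AffineMap.lineMap x y with hL
  have hφ : ConvexOn ℝ (L ⁻¹' C) (h ∘ L) := hconv.comp_affineMap L
  have h0 : (0 : ℝ) ∈ L ⁻¹' C := by
    simp [hL, Set.mem_preimage, AffineMap.lineMap_apply_zero, hx]
  have h1 : (1 : ℝ) ∈ L ⁻¹' C := by
    simp [hL, Set.mem_preimage, AffineMap.lineMap_apply_one, hy]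
  have hLd : HasDerivAt (fun t : ℝ => L t) (y - x) 0 := by
    have h' : HasDerivAt (fun t : ℝ => t • (y - x) + x) ((1 : ℝ) • (y - x)) 0 :=
      ((hasDerivAt_id (0 : ℝ)).smul_const (y - x)).add_const x
    simp only [one_smul] at h'
    have heq : (fun t : ℝ => L t) = fun t : ℝ => t • (y - x) + x := by
      funext t; simp [hL, AffineMap.lineMap_apply_module]; module
    rw [heq]; exact h'
  have hD : HasDerivAt (h ∘ L) (inner ℝ (gradient h x) (y - x) : ℝ) 0 := by
    have hg := hd.hasGradientAt
    have hf : HasFDerivAt h (InnerProductSpace.toDual ℝ (E n) (gradient h x)) x :=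
      hg.hasFDerivAt
    have hx0 : L (0 : ℝ) = x := by simp [hL]
    rw [← hx0] at hf
    have := hf.comp_hasDerivAt (0 : ℝ) hLd
    simpa [InnerProductSpace.toDual_apply_apply, hx0] using this
  have := hφ.le_slope_of_hasDerivAt h0 h1 zero_lt_one hD
  simpa [slope_def_field, Function.comp, hL, AffineMap.lineMap_apply_zero,
    AffineMap.lineMap_apply_one] using this

/-- Let `C ⊆ ℝⁿ` be a nonempty open convex set and `h` convex and
differentiable on `C`.  If `(xʲ) ⊆ C` converges to a boundary point `x*` of `C`, with
`‖∇h(xʲ)‖ → ∞` and `∇h(xʲ)/‖∇h(xʲ)‖ → ν`, then `ν ∈ N_{cl C}(x*)`, i.e.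
`⟨ν, y − x*⟩ ≤ 0` for all `y ∈ cl C`. -/
theorem stmt6 (n : ℕ) (C : Set (E n)) (h : E n → ℝ)
    (hCne : C.Nonempty) (hCopen : IsOpen C) (hCconv : Convex ℝ C)
    (hconv : ConvexOn ℝ C h) (hdiff : ∀ x ∈ C, DifferentiableAt ℝ h x)
    (xseq : ℕ → E n) (xstar : E n) (ν : E n)
    (hseqC : ∀ j, xseq j ∈ C)
    (hlim : Tendsto xseq atTop (𝓝 xstar))
    (hbd : xstar ∈ frontier C)
    (hblow : Tendsto (fun j => ‖gradient h (xseq j)‖) atTop atTop)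
    (hdir : Tendsto (fun j => ‖gradient h (xseq j)‖⁻¹ • gradient h (xseq j)) atTop (𝓝 ν)) :
    ∀ y ∈ closure C, (inner ℝ ν (y - xstar) : ℝ) ≤ 0 := by
  obtain ⟨z, hz⟩ := hCne
  -- step 1: the inequality holds for all y in C
  have hC : ∀ y ∈ C, (inner ℝ ν (y - xstar) : ℝ) ≤ 0 := by
    intro y hy
    set g : ℕ → E n := fun j => gradient h (xseq j) with hg
    -- pointwise bound
    have key : ∀ j, (inner ℝ (‖g j‖⁻¹ • g j) (y - xseq j) : ℝ) ≤
        ‖g j‖⁻¹ * (h y - h z - inner ℝ (gradient h z) (xseq j - z)) := by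
      intro j
      have h1 : (inner ℝ (g j) (y - xseq j) : ℝ) ≤ h y - h (xseq j) :=
        grad_ineq hconv (hseqC j) hy (hdiff _ (hseqC j))
      have h2 : (inner ℝ (gradient h z) (xseq j - z) : ℝ) ≤ h (xseq j) - h z :=
        grad_ineq hconv hz (hseqC j) (hdiff _ hz)
      have h3 : (inner ℝ (g j) (y - xseq j) : ℝ) ≤
          h y - h z - inner ℝ (gradient h z) (xseq j - z) := by linarith
      rw [real_inner_smul_left]
      exact mul_le_mul_of_nonneg_left h3 (by positivity)
    -- LHS tends to inner ℝ ν (y - xstar)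
    have hA : Tendsto (fun j => (inner ℝ (‖g j‖⁻¹ • g j) (y - xseq j) : ℝ)) atTop
        (𝓝 (inner ℝ ν (y - xstar))) :=
      hdir.inner (tendsto_const_nhds.sub hlim)
    -- RHS tends to 0
    have hinv : Tendsto (fun j => ‖g j‖⁻¹) atTop (𝓝 0) := hblow.inv_tendsto_atTop
    have hfac : Tendsto (fun j => h y - h z - (inner ℝ (gradient h z) (xseq j - z) : ℝ)) atTop
        (𝓝 (h y - h z - inner ℝ (gradient h z) (xstar - z))) :=
      tendsto_const_nhds.sub ((tendsto_const_nhds.inner (hlim.sub tendsto_const_nhds)))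
    have hB : Tendsto (fun j => ‖g j‖⁻¹ *
        (h y - h z - (inner ℝ (gradient h z) (xseq j - z) : ℝ))) atTop (𝓝 0) := by
      simpa using hinv.mul hfac
    exact le_of_tendsto_of_tendsto' hA hB key
  -- step 2: pass to the closure
  have hcl : IsClosed {w : E n | (inner ℝ ν (w - xstar) : ℝ) ≤ 0} := by
    apply isClosed_le _ continuous_const
    exact continuous_const.inner (continuous_id.sub continuous_const)
  intro y hy
  exact hcl.closure_subset_iff.mpr hC hy
end
end

section
/- Let C be a nonempty open convex subset of ℝⁿ and 𝒜 an affine subspace of ℝⁿ such that C ∩ 𝒜 ≠ ∅, and let 𝒜₀ = 𝒜 − 𝒜 be the direction space of 𝒜. If x* ∈ (bd C) ∩ 𝒜, then N_{cl C}(x*) ∩ 𝒜₀^⊥ = {0}. -/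
noncomputable section
open Set Filter Topology

/-- Let `C` be a nonempty open convex subset of `ℝⁿ` and `𝒜` an affine
subspace with `C ∩ 𝒜 ≠ ∅` and direction space `𝒜₀`.  If `x* ∈ (bd C) ∩ 𝒜` then
`N_{cl C}(x*) ∩ 𝒜₀^⊥ = {0}`. -/
theorem stmt7 (n : ℕ) (C : Set (E n)) (𝒜 : AffineSubspace ℝ (E n))
    (hCne : C.Nonempty) (hCopen : IsOpen C) (hCconv : Convex ℝ C)
    (hCA : (C ∩ (𝒜 : Set (E n))).Nonempty)
    (xstar : E n) (hx : xstar ∈ frontier C) (hxA : xstar ∈ 𝒜) :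
    {ν : E n | ∀ y ∈ closure C, (inner ℝ (y - xstar) ν : ℝ) ≤ 0} ∩ (𝒜.directionᗮ : Set (E n))
      = {0} := by
  ext ν
  simp only [Set.mem_inter_iff, Set.mem_setOf_eq, Set.mem_singleton_iff, SetLike.mem_coe]
  constructor
  · rintro ⟨hnorm, hperp⟩
    by_contra hν
    obtain ⟨z, hzC, hzA⟩ := hCA
    have hzd : (inner ℝ (z - xstar) ν : ℝ) = 0 := by
      have : z - xstar ∈ 𝒜.direction := by
        simpa [vsub_eq_sub] using AffineSubspace.vsub_mem_direction hzA hxA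
      exact (Submodule.mem_orthogonal _ _).mp hperp _ this
    obtain ⟨ε, hε, hball⟩ := Metric.isOpen_iff.mp hCopen z hzC
    set t : ℝ := ε / (2 * ‖ν‖) with ht
    have hνpos : 0 < ‖ν‖ := norm_pos_iff.mpr hν
    have htpos : 0 < t := div_pos hε (by positivity)
    have hmem : z + t • ν ∈ C := by
      apply hball
      rw [Metric.mem_ball, dist_eq_norm]
      have : ‖z + t • ν - z‖ = t * ‖ν‖ := by
        simp [norm_smul, abs_of_pos htpos]
      rw [this, ht]
      have h2 : ε / (2 * ‖ν‖) * ‖ν‖ = ε / 2 := by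
        field_simp
      rw [h2]; linarith
    have := hnorm _ (subset_closure hmem)
    have hcalc : (inner ℝ (z + t • ν - xstar) ν : ℝ) = t * ‖ν‖ ^ 2 := by
      have : z + t • ν - xstar = (z - xstar) + t • ν := by abel
      rw [this, inner_add_left, hzd, real_inner_smul_left, real_inner_self_eq_norm_sq]
      ring
    rw [hcalc] at this
    nlinarith [mul_pos htpos (pow_pos hνpos 2)]
  · rintro rfl
    refine ⟨fun y _ => by simp, Submodule.zero_mem _⟩
end
end

section
/- Let B be a real p×n matrix of full rank n with rows B₁, …, B_p (p ≥ n), d ∈ ℝᵖ, c ∈ ℝⁿ, and suppose the linear program min{⟨c, x⟩ : Bx ≥ d} admits a unique optimal solution a. Then the function 𝒩(x) = Σ_{i=1}^{p} |⟨B_i, x⟩| is a norm on ℝⁿ, and there exists k₀ > 0 such that for every y ∈ ℝⁿ with By ≥ d one has ⟨c, y − a⟩ ≥ k₀ 𝒩(y − a). -/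
noncomputable section
open Set Filter Topology Matrix

lemma stmt14_inj {n p : ℕ} (B : Matrix (Fin p) (Fin n) ℝ) (hrank : B.rank = n) :
    Function.Injective B.mulVec := by
  have h1 := B.mulVecLin.finrank_range_add_finrank_ker
  rw [Matrix.rank] at hrank
  rw [hrank, Module.finrank_pi] at h1
  simp only [Fintype.card_fin] at h1
  have hker : Module.finrank ℝ (LinearMap.ker B.mulVecLin) = 0 := by omega
  have : LinearMap.ker B.mulVecLin = ⊥ := Submodule.finrank_eq_zero.mp hker
  have hinj := LinearMap.ker_eq_bot.mp this
  intro x y hxy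
  exact hinj (by simpa [Matrix.mulVecLin_apply] using hxy)

/-- Lemma `L:norm`.  If the linear program `min{⟨c,x⟩ : Bx ≥ d}` with
`B` a full rank `p×n` matrix (`p ≥ n`) has the unique optimal solution `a`, then
`𝒩(x) = Σᵢ |⟨Bᵢ,x⟩|` is a norm on `ℝⁿ` and there is `k₀ > 0` such that
`⟨c, y − a⟩ ≥ k₀ 𝒩(y − a)` for all feasible `y`. -/
theorem stmt14 (n p : ℕ) (hnp : n ≤ p)
    (B : Matrix (Fin p) (Fin n) ℝ) (hrank : B.rank = n)
    (d : Fin p → ℝ) (c : E n) (a : E n)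
    -- `a` is the unique optimal solution of the linear program
    (haF : ∀ i, d i ≤ B.mulVec a i)
    (hopt : ∀ y : E n, (∀ i, d i ≤ B.mulVec y i) → (inner ℝ c a : ℝ) ≤ (inner ℝ c y : ℝ))
    (huniq : ∀ y : E n, (∀ i, d i ≤ B.mulVec y i) →
      (inner ℝ c y : ℝ) = (inner ℝ c a : ℝ) → y = a) :
    -- `𝒩` is a norm on `ℝⁿ` ...
    (∀ x : E n, 0 ≤ ∑ i, |B.mulVec x i|) ∧
    (∀ x : E n, (∑ i, |B.mulVec x i|) = 0 ↔ x = 0) ∧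
    (∀ x y : E n, (∑ i, |B.mulVec (x + y) i|) ≤ (∑ i, |B.mulVec x i|) + ∑ i, |B.mulVec y i|) ∧
    (∀ (r : ℝ) (x : E n), (∑ i, |B.mulVec (r • x) i|) = |r| * ∑ i, |B.mulVec x i|) ∧
    -- ... and the linear growth estimate holds
    (∃ k₀ > (0:ℝ), ∀ y : E n, (∀ i, d i ≤ B.mulVec y i) →
      k₀ * (∑ i, |B.mulVec (y - a) i|) ≤ (inner ℝ c (y - a) : ℝ)) := by
  have hinj := stmt14_inj B hrank
  set N : E n → ℝ := fun x => ∑ i, |B.mulVec x i| with hN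
  -- basic norm properties
  have hnonneg : ∀ x : E n, 0 ≤ N x := fun x =>
    Finset.sum_nonneg fun i _ => abs_nonneg _
  have hzero : N 0 = 0 := by
    simp [hN, show B.mulVec (0 : E n) = 0 from Matrix.mulVec_zero B]
  have hdef : ∀ x : E n, N x = 0 ↔ x = 0 := by
    intro x
    constructor
    · intro hx
      have h := (Finset.sum_eq_zero_iff_of_nonneg (fun i _ => abs_nonneg _)).mp hx
      have : B.mulVec x = B.mulVec 0 := by
        funext i
        rw [Matrix.mulVec_zero]
        exact abs_eq_zero.mp (h i (Finset.mem_univ i))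
      exact WithLp.ofLp_injective 2 (hinj this)
    · rintro rfl; exact hzero
  have hhom : ∀ (r : ℝ) (x : E n), N (r • x) = |r| * N x := by
    intro r x
    simp only [hN]
    rw [Finset.mul_sum]
    refine Finset.sum_congr rfl fun i _ => ?_
    have : B.mulVec (r • x) = r • B.mulVec x := Matrix.mulVec_smul B r x
    rw [WithLp.ofLp_smul, this, Pi.smul_apply, smul_eq_mul, abs_mul]
  have htri : ∀ x y : E n, N (x + y) ≤ N x + N y := by
    intro x y
    simp only [hN]
    rw [← Finset.sum_add_distrib]
    refine Finset.sum_le_sum fun i _ => ?_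
    rw [WithLp.ofLp_add, Matrix.mulVec_add, Pi.add_apply]
    exact abs_add_le _ _
  have hpos : ∀ x : E n, x ≠ 0 → 0 < N x := by
    intro x hx
    rcases (hnonneg x).lt_or_eq with h | h
    · exact h
    · exact absurd ((hdef x).mp h.symm) hx
  refine ⟨hnonneg, hdef, htri, hhom, ?_⟩
  -- continuity facts
  have hcontmv : ∀ i, Continuous fun x : E n => B.mulVec x i := by
    intro i
    simp only [Matrix.mulVec, dotProduct]
    exact continuous_finset_sum _ fun j _ =>
      (continuous_const.mul (by fun_prop))
  have hcontN : Continuous N := by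
    exact continuous_finset_sum _ fun i _ => (hcontmv i).abs
  have hcontc : Continuous fun v : E n => (inner ℝ c v : ℝ) :=
    (innerSL ℝ c).continuous
  -- the cone of feasible directions
  set D : Set (E n) := {v | ∀ i, B.mulVec a i = d i → 0 ≤ B.mulVec v i} with hD
  have key : ∀ (t : ℝ) (v : E n) (i : Fin p),
      B.mulVec (a + t • v) i = B.mulVec a i + t * B.mulVec v i := by
    intro t v i
    rw [Matrix.mulVec_add, Matrix.mulVec_smul]
    simp
  -- feasible y gives a direction in D
  have hD1 : ∀ y : E n, (∀ i, d i ≤ B.mulVec y i) → y - a ∈ D := by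
    intro y hy i hi
    have : B.mulVec (y - a) i = B.mulVec y i - B.mulVec a i := by
      rw [Matrix.mulVec_sub]; simp
    rw [WithLp.ofLp_sub, this, hi]
    linarith [hy i]
  -- D is a cone
  have hDcone : ∀ v ∈ D, ∀ r : ℝ, 0 ≤ r → r • v ∈ D := by
    intro v hv r hr i hi
    have : B.mulVec (r • v) = r • B.mulVec v := Matrix.mulVec_smul B r v
    rw [WithLp.ofLp_smul, this, Pi.smul_apply, smul_eq_mul]
    exact mul_nonneg hr (hv i hi)
  -- from any direction in D, a small step stays feasible
  have hfeas : ∀ v ∈ D, ∃ t : ℝ, 0 < t ∧ ∀ i, d i ≤ B.mulVec (a + t • v) i := by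
    intro v hv
    have h1 : ∀ i, ∀ᶠ t in 𝓝[>] (0:ℝ), d i ≤ B.mulVec (a + t • v) i := by
      intro i
      by_cases hi : B.mulVec a i = d i
      · filter_upwards [self_mem_nhdsWithin] with t ht
        rw [key, hi]
        have h0 : (0:ℝ) < t := ht
        nlinarith [hv i hi]
      · have hlt : d i < B.mulVec a i := lt_of_le_of_ne (haF i) (Ne.symm hi)
        have hT : Tendsto (fun t : ℝ => B.mulVec (a + t • v) i) (𝓝[>] 0)
            (𝓝 (B.mulVec a i)) := by
          have : Tendsto (fun t : ℝ => B.mulVec a i + t * B.mulVec v i) (𝓝 0)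
              (𝓝 (B.mulVec a i + 0 * B.mulVec v i)) := by
            exact (continuous_const.add (continuous_id.mul continuous_const)).tendsto 0
          simp only [zero_mul, add_zero] at this
          have h' := this.mono_left (nhdsWithin_le_nhds : 𝓝[>] (0:ℝ) ≤ 𝓝 0)
          refine h'.congr fun t => ?_
          rw [key]
        have := hT.eventually (eventually_gt_nhds hlt)
        filter_upwards [this] with t ht using le_of_lt ht
      
    have h2 : ∀ᶠ t in 𝓝[>] (0:ℝ), ∀ i, d i ≤ B.mulVec (a + t • v) i :=
      eventually_all.mpr h1
    have h3 : ∀ᶠ t in 𝓝[>] (0:ℝ), (0:ℝ) < t := self_mem_nhdsWithin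
    obtain ⟨t, ht1, ht2⟩ := (h3.and h2).exists
    exact ⟨t, ht1, ht2⟩
  -- directions in D have positive inner product with c
  have hD2 : ∀ v ∈ D, v ≠ 0 → 0 < (inner ℝ c v : ℝ) := by
    intro v hv hv0
    obtain ⟨t, ht, hfe0⟩ := hfeas v hv
    have hfe : ∀ i, d i ≤ B.mulVec (a + t • v : E n).ofLp i := fun i => by
      rw [WithLp.ofLp_add, WithLp.ofLp_smul]; exact hfe0 i
    have h1 := hopt _ hfe
    have h2 : (inner ℝ c (a + t • v) : ℝ) = inner ℝ c a + t * inner ℝ c v := by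
      rw [inner_add_right, real_inner_smul_right]
    have hnn : 0 ≤ (inner ℝ c v : ℝ) := by nlinarith
    rcases hnn.lt_or_eq with h | h
    · exact h
    · exfalso
      have heq : a + t • v = a := huniq _ hfe (by rw [h2, ← h]; ring)
      have : t • v = 0 := add_eq_left.mp heq
      rcases smul_eq_zero.mp this with h' | h'
      · exact absurd h' (ne_of_gt ht)
      · exact hv0 h'
  -- N dominates a multiple of the euclidean norm
  have hdom : ∃ ε > (0:ℝ), ∀ v : E n, ε * ‖v‖ ≤ N v := by
    by_cases hn : n = 0
    · refine ⟨1, one_pos, fun v => ?_⟩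
      subst hn
      have : v = 0 := Subsingleton.elim v 0
      simp [this, hzero]
    · have hsc : IsCompact (Metric.sphere (0 : E n) 1) := isCompact_sphere 0 1
      have hne : (Metric.sphere (0 : E n) 1).Nonempty := by
        refine ⟨EuclideanSpace.single ⟨0, Nat.pos_of_ne_zero hn⟩ 1, ?_⟩
        simp [EuclideanSpace.norm_single]
      obtain ⟨x₀, hx₀, hmin⟩ := hsc.exists_isMinOn hne hcontN.continuousOn
      have hx₀n : ‖x₀‖ = 1 := by simpa using hx₀
      have hx₀0 : x₀ ≠ 0 := by
        intro h; rw [h] at hx₀n; simp at hx₀n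
      refine ⟨N x₀, hpos x₀ hx₀0, fun v => ?_⟩
      by_cases hv : v = 0
      · simp [hv, hzero]
      · have hvn : ‖v‖ ≠ 0 := norm_ne_zero_iff.mpr hv
        have hw : (‖v‖⁻¹ • v) ∈ Metric.sphere (0 : E n) 1 := by
          simp [norm_smul, abs_of_nonneg (inv_nonneg.mpr (norm_nonneg v)),
            inv_mul_cancel₀ hvn]
        have this' : N x₀ ≤ N (‖v‖⁻¹ • v) := hmin hw
        have hNv : N (‖v‖⁻¹ • v) = ‖v‖⁻¹ * N v := by
          rw [hhom, abs_of_nonneg (inv_nonneg.mpr (norm_nonneg v))]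
        rw [hNv] at this'
        have this := this'
        have hvpos : (0:ℝ) < ‖v‖ := lt_of_le_of_ne (norm_nonneg v) (Ne.symm hvn)
        rw [mul_comm]
        calc ‖v‖ * N x₀ ≤ ‖v‖ * (‖v‖⁻¹ * N v) := by
              exact mul_le_mul_of_nonneg_left this (le_of_lt hvpos)
          _ = N v := by field_simp
  obtain ⟨ε, hε, hdomv⟩ := hdom
  -- the compact set S
  set S : Set (E n) := {v | v ∈ D ∧ N v = 1} with hS
  have hSclosed : IsClosed S := by
    have hDclosed : IsClosed D := by
      have : D = ⋂ i, {v : E n | B.mulVec a i = d i → 0 ≤ B.mulVec v i} := by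
        ext v; simp [hD, Set.mem_iInter]
      rw [this]
      refine isClosed_iInter fun i => ?_
      by_cases hi : B.mulVec a i = d i
      · simp only [hi, forall_true_left]
        exact isClosed_le continuous_const (hcontmv i)
      · simp [hi]
    exact hDclosed.inter (isClosed_eq hcontN continuous_const)
  have hSbdd : Bornology.IsBounded S := by
    refine (Metric.isBounded_closedBall (x := (0:E n)) (r := ε⁻¹)).subset ?_
    intro v hv
    have h1 := hdomv v
    rw [hv.2] at h1
    simp only [Metric.mem_closedBall, dist_zero_right]
    rw [← one_div]
    rw [le_div_iff₀ hε, mul_comm]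
    exact h1
  have hScomp : IsCompact S := Metric.isCompact_of_isClosed_isBounded hSclosed hSbdd
  by_cases hSne : S.Nonempty
  · obtain ⟨v₀, hv₀S, hmin⟩ := hScomp.exists_isMinOn hSne hcontc.continuousOn
    have hv₀0 : v₀ ≠ 0 := by
      intro h
      have := hv₀S.2
      rw [h, hzero] at this
      norm_num at this
    have hk₀ : 0 < (inner ℝ c v₀ : ℝ) := hD2 v₀ hv₀S.1 hv₀0
    refine ⟨inner ℝ c v₀, hk₀, fun y hy => ?_⟩
    by_cases hya : y = a
    · simp [hya, hzero, inner_zero_right]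
    · set v : E n := y - a with hv
      have hv0 : v ≠ 0 := sub_ne_zero.mpr hya
      have hNv : 0 < N v := hpos v hv0
      have hvD : v ∈ D := hD1 y hy
      have hwS : (N v)⁻¹ • v ∈ S := by
        refine ⟨hDcone v hvD _ (inv_nonneg.mpr (le_of_lt hNv)), ?_⟩
        rw [hhom, abs_of_nonneg (inv_nonneg.mpr (le_of_lt hNv)),
          inv_mul_cancel₀ (ne_of_gt hNv)]
      have h1 : (inner ℝ c v₀ : ℝ) ≤ (inner ℝ c ((N v)⁻¹ • v) : ℝ) := hmin hwS
      have h2 : (inner ℝ c ((N v)⁻¹ • v) : ℝ) = (N v)⁻¹ * inner ℝ c v := by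
        rw [real_inner_smul_right]
      rw [h2] at h1
      have := mul_le_mul_of_nonneg_left h1 (le_of_lt hNv)
      show (inner ℝ c v₀ : ℝ) * N v ≤ (inner ℝ c v : ℝ)
      calc (inner ℝ c v₀ : ℝ) * N v = N v * inner ℝ c v₀ := by ring
        _ ≤ N v * ((N v)⁻¹ * inner ℝ c v) := this
        _ = inner ℝ c v := by field_simp
  · refine ⟨1, one_pos, fun y hy => ?_⟩
    have hya : y = a := by
      by_contra hya
      have hv0 : y - a ≠ 0 := sub_ne_zero.mpr hya
      have hNv : 0 < N (y - a) := hpos _ hv0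
      apply hSne
      refine ⟨(N (y - a))⁻¹ • (y - a), hDcone _ (hD1 y hy) _ (inv_nonneg.mpr hNv.le), ?_⟩
      rw [hhom, abs_of_nonneg (inv_nonneg.mpr hNv.le), inv_mul_cancel₀ (ne_of_gt hNv)]
    simp [hya, hzero, inner_zero_right]
end
end

section
/- Let H be a symmetric positive definite n×n real matrix, A a real m×n matrix of full rank m < n, c ∈ ℝⁿ, and let Π denote the Euclidean orthogonal projection of ℝⁿ onto ker A. Then the matrix A H⁻¹ Aᵀ is invertible and Π H · (H⁻¹[I − Aᵀ(A H⁻¹ Aᵀ)⁻¹ A H⁻¹] c) = Π c. In other words, the push-forward under the Legendre transform coordinates map φ_h(x) = Π ∇h(x) of the Riemannian gradient vector field ∇_H f(x) = H⁻¹[I − Aᵀ(A H⁻¹ Aᵀ)⁻¹ A H⁻¹] c of a linear function f(x) = ⟨c, x⟩ is the constant vector field Π c. -/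
noncomputable section
open Set Filter Topology Matrix

lemma aux_inj {m n : ℕ} (A : Matrix (Fin m) (Fin n) ℝ) (hrank : A.rank = m) :
    Function.Injective Aᵀ.mulVec := by
  have hker : LinearMap.ker Aᵀ.mulVecLin = ⊥ := by
    have h1 := Aᵀ.mulVecLin.finrank_range_add_finrank_ker
    have h2 : Aᵀ.rank = m := by rw [Matrix.rank_transpose, hrank]
    rw [show Module.finrank ℝ (LinearMap.range Aᵀ.mulVecLin) = Aᵀ.rank from rfl, h2] at h1
    simp only [Module.finrank_pi, Fintype.card_fin] at h1
    have : Module.finrank ℝ (LinearMap.ker Aᵀ.mulVecLin) = 0 := by omega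
    exact Submodule.finrank_eq_zero.mp this
  intro x y hxy
  have := LinearMap.ker_eq_bot.mp hker
  exact this hxy

/-- Proposition `P:pushforward`.  For a symmetric positive definite
`H`, a full rank `m×n` matrix `A` (`m < n`), and `Π` the orthogonal projection onto
`ker A`, the matrix `A H⁻¹ Aᵀ` is invertible and
`Π H (H⁻¹[I − Aᵀ(A H⁻¹ Aᵀ)⁻¹ A H⁻¹] c) = Π c`: the push-forward under the Legendre
transform coordinates of the Riemannian gradient of a linear function is constant. -/
theorem stmt19 (n m : ℕ) (hm : 0 < m) (hmn : m < n)
    (H : Matrix (Fin n) (Fin n) ℝ) (hH : H.PosDef)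
    (A : Matrix (Fin m) (Fin n) ℝ) (hrank : A.rank = m)
    (c : E n) :
    IsUnit (A * H⁻¹ * Aᵀ) ∧
    (Submodule.orthogonalProjectionOnto (LinearMap.ker (Matrix.toEuclideanLin A))
        (matVec H (matVec (H⁻¹ * (1 - Aᵀ * (A * H⁻¹ * Aᵀ)⁻¹ * A * H⁻¹)) c)) : E n) =
      (Submodule.orthogonalProjectionOnto (LinearMap.ker (Matrix.toEuclideanLin A)) c : E n) := by
  have hHinv : (H⁻¹).PosDef := hH.inv
  -- S := A * H⁻¹ * Aᵀ is positive definite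
  have hS : (A * H⁻¹ * Aᵀ).PosDef := by
    refine posDef_iff_dotProduct_mulVec.mpr ⟨?_, fun x hx => ?_⟩
    · have := (hHinv.posSemidef.mul_mul_conjTranspose_same A).isHermitian
      rwa [conjTranspose_eq_transpose_of_trivial] at this
    · have hAx : Aᵀ *ᵥ x ≠ 0 := by
        intro h
        exact hx (aux_inj A hrank (by simpa using h))
      have := (posDef_iff_dotProduct_mulVec.mp hHinv).2 hAx
      simp only [star_trivial] at this ⊢
      calc x ⬝ᵥ ((A * H⁻¹ * Aᵀ) *ᵥ x) = x ⬝ᵥ (A *ᵥ (H⁻¹ *ᵥ (Aᵀ *ᵥ x))) := by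
            rw [← mulVec_mulVec, ← mulVec_mulVec]
        _ = (Aᵀ *ᵥ x) ⬝ᵥ (H⁻¹ *ᵥ (Aᵀ *ᵥ x)) := by
            rw [dotProduct_mulVec x A, ← vecMul_transpose, mulVec_transpose]
        _ > 0 := this
  refine ⟨hS.isUnit, ?_⟩
  set K := LinearMap.ker (Matrix.toEuclideanLin A)
  -- simplify the vector
  have hHH : H * H⁻¹ = 1 := Matrix.mul_nonsing_inv H hH.det_pos.ne'.isUnit
  set T : Matrix (Fin n) (Fin n) ℝ := Aᵀ * (A * H⁻¹ * Aᵀ)⁻¹ * A * H⁻¹ with hT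
  have hvec : matVec H (matVec (H⁻¹ * (1 - T)) c) = c - matVec T c := by
    have hmul : H * (H⁻¹ * (1 - T)) = 1 - T := by
      rw [← Matrix.mul_assoc, hHH, Matrix.one_mul]
    simp only [matVec, WithLp.ofLp_toLp, mulVec_mulVec, hmul, sub_mulVec, one_mulVec, WithLp.toLp_sub, WithLp.toLp_ofLp]
  rw [hvec]
  -- matVec T c is orthogonal to ker A
  have hmem : matVec T c ∈ Kᗮ := by
    intro u hu
    have hAu : A *ᵥ u = 0 := by
      have : Matrix.toEuclideanLin A u = 0 := hu
      have := congrArg WithLp.ofLp this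
      simpa [Matrix.toEuclideanLin] using this
    have : matVec T c = WithLp.toLp 2 (Aᵀ *ᵥ (((A * H⁻¹ * Aᵀ)⁻¹ * A * H⁻¹) *ᵥ c)) := by
      show WithLp.toLp 2 (T *ᵥ c) = _
      rw [mulVec_mulVec, hT]
      simp [Matrix.mul_assoc]
    rw [this]
    show (inner ℝ u (WithLp.toLp 2 (Aᵀ *ᵥ _)) : ℝ) = 0
    rw [PiLp.inner_apply]
    simp only [RCLike.inner_apply, conj_trivial, PiLp.toLp_apply]
    show (Aᵀ *ᵥ (((A * H⁻¹ * Aᵀ)⁻¹ * A * H⁻¹) *ᵥ c)) ⬝ᵥ u = 0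
    rw [dotProduct_comm, dotProduct_mulVec, vecMul_transpose, hAu, zero_dotProduct]
  rw [map_sub]
  rw [Submodule.orthogonalProjectionOnto_apply_of_mem_orthogonal hmem]
  simp
end
end
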